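/- For a prime p, a positive integer m, and ℓ ≥ 0, the number of subgroups of ℤ^m of index p^ℓ equals ∑_{(ℓ_1,…,ℓ_m), ℓ_i ≥ 0, ℓ_1+⋯+ℓ_m = ℓ} ∏_{i=1}^{m} p^{ℓ_i·(i−1)}. -/

import Mathlib

open AddSubgroup

variable {G : Type*} [AddCommGroup G]

def hermiteSub (K : AddSubgroup G) (d : ℤ) (v : G) : AddSubgroup (G × ℤ) where
  carrier := {x | ∃ k : ℤ, x.2 = k * d ∧ x.1 - k • v ∈ K}
  zero_mem' := ⟨0, by simp, by simpa using K.zero_mem⟩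
  add_mem' := by
    rintro x y ⟨k, hk, hxk⟩ ⟨l, hl, hyl⟩
    refine ⟨k + l, by simp [hk, hl, add_mul], ?_⟩
    have : x.1 + y.1 - (k + l) • v = (x.1 - k • v) + (y.1 - l • v) := by
      rw [add_smul]; abel
    rw [Prod.fst_add, this]
    exact K.add_mem hxk hyl
  neg_mem' := by
    rintro x ⟨k, hk, hxk⟩
    refine ⟨-k, by simp [hk, neg_mul], ?_⟩
    have : -x.1 - (-k) • v = -(x.1 - k • v) := by rw [neg_smul]; abel
    rw [Prod.fst_neg, this]
    exact K.neg_mem hxk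

lemma mem_hermiteSub {K : AddSubgroup G} {d : ℤ} {v : G} {x : G × ℤ} :
    x ∈ hermiteSub K d v ↔ ∃ k : ℤ, x.2 = k * d ∧ x.1 - k • v ∈ K := Iff.rfl

lemma hermiteSub_le (K : AddSubgroup G) (d : ℤ) (v : G) :
    hermiteSub K d v ≤ (⊤ : AddSubgroup G).prod (zmultiples d) := by
  rintro x ⟨k, hk, -⟩
  exact ⟨trivial, ⟨k, by simp [hk, mul_comm]⟩⟩

/-- The quotient homomorphism used to compute the index of `hermiteSub`. -/
noncomputable def hermiteRho (K : AddSubgroup G) (d : ℤ) (v : G) (hd : d ≠ 0) :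
    ((⊤ : AddSubgroup G).prod (zmultiples d)) →+ G ⧸ K where
  toFun x := QuotientAddGroup.mk (x.val.1 - (x.val.2 / d) • v)
  map_zero' := by simp
  map_add' := by
    rintro ⟨x, -, k, hk⟩ ⟨y, -, l, hl⟩
    simp only [zsmul_eq_mul, Int.cast_id] at hk hl
    have h2 : (x + y).2 = x.2 + y.2 := rfl
    have hx : x.2 / d = k := by rw [← hk, Int.mul_ediv_cancel _ hd]
    have hy : y.2 / d = l := by rw [← hl, Int.mul_ediv_cancel _ hd]
    have hxy : (x.2 + y.2) / d = k + l := by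
      rw [← hk, ← hl, ← add_mul, Int.mul_ediv_cancel _ hd]
    have : (x + y).1 - ((x + y).2 / d) • v
        = (x.1 - (x.2 / d) • v) + (y.1 - (y.2 / d) • v) := by
      show x.1 + y.1 - _ • v = _
      rw [h2, hxy, hx, hy, add_smul]; abel
    simp only [AddSubgroup.coe_add, this, QuotientAddGroup.mk_add]

lemma hermiteRho_surjective (K : AddSubgroup G) (d : ℤ) (v : G) (hd : d ≠ 0) :
    Function.Surjective (hermiteRho K d v hd) := by
  intro q
  obtain ⟨g, rfl⟩ := QuotientAddGroup.mk_surjective q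
  exact ⟨⟨(g, 0), trivial, ⟨0, by simp⟩⟩, by simp [hermiteRho, Int.zero_ediv]⟩

lemma hermiteRho_ker (K : AddSubgroup G) (d : ℤ) (v : G) (hd : d ≠ 0) :
    (hermiteRho K d v hd).ker = (hermiteSub K d v).addSubgroupOf _ := by
  ext ⟨x, -, k, hk⟩
  simp only [zsmul_eq_mul, Int.cast_id] at hk
  have hx : x.2 / d = k := by rw [← hk, Int.mul_ediv_cancel _ hd]
  simp only [AddMonoidHom.mem_ker, hermiteRho, AddMonoidHom.coe_mk, ZeroHom.coe_mk,
    QuotientAddGroup.eq_zero_iff, AddSubgroup.mem_addSubgroupOf, mem_hermiteSub, hx]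
  constructor
  · intro h; exact ⟨k, by rw [← hk, mul_comm], h⟩
  · rintro ⟨l, hl, h⟩
    have : l = k := by
      have h' : l * d = k * d := by rw [← hl, hk]
      exact mul_right_cancel₀ hd h'
    rwa [this] at h

lemma hermiteSub_index (K : AddSubgroup G) (d : ℤ) (v : G) (hd : d ≠ 0) :
    (hermiteSub K d v).index = K.index * d.natAbs := by
  have h1 := AddSubgroup.relIndex_mul_index (hermiteSub_le K d v)
  have h2 : (hermiteSub K d v).relIndex ((⊤ : AddSubgroup G).prod (zmultiples d))
      = K.index := by
    rw [AddSubgroup.relIndex, ← hermiteRho_ker K d v hd, AddSubgroup.index_ker]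
    rw [AddMonoidHom.range_eq_top.mpr (hermiteRho_surjective K d v hd)]
    rw [Nat.card_congr AddSubgroup.topEquiv.toEquiv]
    rfl
  rw [← h1, h2]
  congr 1
  simp [Int.index_zmultiples]

lemma hermiteSub_comap_inl (K : AddSubgroup G) (d : ℤ) (v : G) (hd : d ≠ 0) :
    (hermiteSub K d v).comap (AddMonoidHom.inl G ℤ) = K := by
  ext g
  simp only [AddSubgroup.mem_comap, AddMonoidHom.inl_apply, mem_hermiteSub]
  constructor
  · rintro ⟨k, hk, h⟩
    have hk0 : k = 0 := by
      rcases mul_eq_zero.mp hk.symm with h0 | h0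
      · exact h0
      · exact absurd h0 hd
    simpa [hk0] using h
  · intro hg
    exact ⟨0, by simp, by simpa using hg⟩

lemma mem_hermiteSub_self (K : AddSubgroup G) (d : ℤ) (v : G) :
    (v, d) ∈ hermiteSub K d v := ⟨1, by simp, by simpa using K.zero_mem⟩

lemma hermiteSub_map_snd (K : AddSubgroup G) (d : ℤ) (v : G) :
    (hermiteSub K d v).map (AddMonoidHom.snd G ℤ) = zmultiples d := by
  ext z
  simp only [AddSubgroup.mem_map, AddMonoidHom.coe_snd, mem_zmultiples_iff, zsmul_eq_mul,
    Int.cast_id]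
  constructor
  · rintro ⟨x, ⟨k, hk, -⟩, rfl⟩
    exact ⟨k, hk.symm⟩
  · rintro ⟨k, rfl⟩
    exact ⟨k • (v, d), (hermiteSub K d v).zsmul_mem (mem_hermiteSub_self K d v) k,
      by simp [mul_comm]⟩

lemma hermiteSub_congr {K : AddSubgroup G} {d : ℤ} {v v' : G} (h : v - v' ∈ K) :
    hermiteSub K d v = hermiteSub K d v' := by
  ext x
  simp only [mem_hermiteSub]
  constructor
  · rintro ⟨k, hk, hx⟩
    refine ⟨k, hk, ?_⟩
    have : x.1 - k • v' = (x.1 - k • v) + k • (v - v') := by rw [smul_sub]; abel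
    rw [this]
    exact K.add_mem hx (K.zsmul_mem h k)
  · rintro ⟨k, hk, hx⟩
    refine ⟨k, hk, ?_⟩
    have : x.1 - k • v = (x.1 - k • v') - k • (v - v') := by rw [smul_sub]; abel
    rw [this]
    exact K.sub_mem hx (K.zsmul_mem h k)

lemma hermiteSub_inj {K K' : AddSubgroup G} {d d' : ℤ} {v v' : G} (hd : 0 < d) (hd' : 0 < d')
    (h : hermiteSub K d v = hermiteSub K' d' v') :
    K = K' ∧ d = d' ∧ v - v' ∈ K := by
  have hK : K = K' := by
    rw [← hermiteSub_comap_inl K d v hd.ne', ← hermiteSub_comap_inl K' d' v' hd'.ne', h]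
  have hdd : d = d' := by
    have hz : zmultiples d = zmultiples d' := by
      rw [← hermiteSub_map_snd K d v, ← hermiteSub_map_snd K' d' v', h]
    have h1 : d' ∣ d := by
      have : d ∈ zmultiples d' := hz ▸ mem_zmultiples d
      rwa [Int.mem_zmultiples_iff] at this
    have h2 : d ∣ d' := by
      have : d' ∈ zmultiples d := hz ▸ mem_zmultiples d'
      rwa [Int.mem_zmultiples_iff] at this
    exact Int.dvd_antisymm hd.le hd'.le h2 h1
  subst hdd hK
  have := h ▸ mem_hermiteSub_self K d v
  obtain ⟨k, hk, hv⟩ := this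
  have hk1 : k = 1 := by
    have : k * d = 1 * d := by rw [← hk, one_mul]
    exact mul_right_cancel₀ hd.ne' this
  subst hk1
  exact ⟨rfl, rfl, by simpa using hv⟩

lemma exists_hermiteSub (H : AddSubgroup (G × ℤ)) (hH : H.index ≠ 0) :
    ∃ (K : AddSubgroup G) (d : ℤ) (v : G), 0 < d ∧ H = hermiteSub K d v := by
  classical
  obtain ⟨a, ha⟩ := Int.subgroup_cyclic (H.map (AddMonoidHom.snd G ℤ))
  rw [← zmultiples_eq_closure] at ha
  have ha0 : a ≠ 0 := by
    rintro rfl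
    have hle : H ≤ (⊤ : AddSubgroup G).prod ⊥ := by
      intro x hx
      refine ⟨trivial, ?_⟩
      have : x.2 ∈ H.map (AddMonoidHom.snd G ℤ) := ⟨x, hx, rfl⟩
      rw [ha] at this
      simpa using this
    have hdvd := AddSubgroup.index_dvd_of_le hle
    have h0 : ((⊤ : AddSubgroup G).prod (⊥ : AddSubgroup ℤ)).index = 0 := by
      simp [AddSubgroup.index_bot, Nat.card_eq_zero_of_infinite]
    rw [h0] at hdvd
    exact hH (zero_dvd_iff.mp hdvd)
  set d : ℤ := |a| with hdef
  have hd : 0 < d := abs_pos.mpr ha0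
  have hS : H.map (AddMonoidHom.snd G ℤ) = zmultiples d := by
    rw [ha]
    rcases abs_choice a with h | h
    · rw [hdef, h]
    · rw [hdef, h, zmultiples_neg]
  have hdS : d ∈ H.map (AddMonoidHom.snd G ℤ) := by
    rw [hS]; exact mem_zmultiples d
  obtain ⟨x, hxH, hx2⟩ := hdS
  have hx2' : x.2 = d := hx2
  refine ⟨H.comap (AddMonoidHom.inl G ℤ), d, x.1, hd, ?_⟩
  ext y
  simp only [mem_hermiteSub]
  constructor
  · intro hy
    have : y.2 ∈ zmultiples d := hS ▸ ⟨y, hy, rfl⟩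
    obtain ⟨k, hk⟩ := this
    simp only [zsmul_eq_mul, Int.cast_id] at hk
    refine ⟨k, hk.symm, ?_⟩
    have hmem : y - k • x ∈ H := H.sub_mem hy (H.zsmul_mem hxH k)
    have h2 : (y - k • x).2 = 0 := by
      have hcalc : (y - k • x).2 = y.2 - k * x.2 := by simp
      rw [hcalc, hx2', ← hk, sub_self]
    simp only [AddSubgroup.mem_comap, AddMonoidHom.inl_apply]
    have : ((y - k • x).1, (0 : ℤ)) ∈ H := by
      rw [← h2]
      exact hmem
    have hfst : (y - k • x).1 = y.1 - k • x.1 := by simp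
    rwa [hfst] at this
  · rintro ⟨k, hk, hv⟩
    simp only [AddSubgroup.mem_comap, AddMonoidHom.inl_apply] at hv
    have : y = (y.1 - k • x.1, (0:ℤ)) + k • x := by
      ext
      · simp
      · simp [hx2', ← hk]
    rw [this]
    exact H.add_mem hv (H.zsmul_mem hxH k)

/-- `hermiteSub` lifted to the quotient `G ⧸ K` in the `v` argument. -/
def hermiteOfQuot (K : AddSubgroup G) (d : ℤ) (q : G ⧸ K) : AddSubgroup (G × ℤ) :=
  Quotient.liftOn' q (fun v => hermiteSub K d v) (by
    intro a b h
    rw [QuotientAddGroup.leftRel_apply] at h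
    refine hermiteSub_congr ?_
    have : a - b = -(-a + b) := by abel
    rw [this]
    exact K.neg_mem h)

@[simp] lemma hermiteOfQuot_mk (K : AddSubgroup G) (d : ℤ) (v : G) :
    hermiteOfQuot K d (v : G ⧸ K) = hermiteSub K d v := rfl

lemma nat_card_sigma {ι : Type*} [Fintype ι] (α : ι → Type*) [∀ i, Finite (α i)] :
    Nat.card (Σ i, α i) = ∑ i, Nat.card (α i) := by
  haveI : ∀ i, Fintype (α i) := fun i => Fintype.ofFinite _
  simp [Nat.card_eq_fintype_card]

variable (G) in
/-- The Hermite parameter type for subgroups of `G × ℤ` of index `n`. -/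
abbrev HermiteData (n : ℕ) : Type _ :=
  Σ (e : n.divisors) (K : {K : AddSubgroup G // K.index = (e : ℕ)}), G ⧸ (K : AddSubgroup G)

/-- The parametrization of index-`n` subgroups of `G × ℤ` by Hermite data. -/
noncomputable def hermiteEquiv (n : ℕ) (hn : n ≠ 0) :
    HermiteData G n ≃ {H : AddSubgroup (G × ℤ) // H.index = n} := by
  refine Equiv.ofBijective (fun t => ⟨hermiteOfQuot t.2.1.1 ((n / (t.1 : ℕ) : ℕ) : ℤ) t.2.2, ?_⟩)
    ⟨?_, ?_⟩
  · obtain ⟨⟨e, he⟩, ⟨K, hK⟩, q⟩ := t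
    induction q using QuotientAddGroup.induction_on with
    | H v =>
      rw [hermiteOfQuot_mk, hermiteSub_index K _ v (by
        exact_mod_cast (Nat.div_pos (Nat.le_of_dvd (Nat.pos_of_ne_zero hn)
          (Nat.dvd_of_mem_divisors he)) (Nat.pos_of_mem_divisors he)).ne')]
      simp only [Int.natAbs_natCast, hK]
      exact Nat.mul_div_cancel' (Nat.dvd_of_mem_divisors he)
  · rintro ⟨⟨e, he⟩, ⟨K, hK⟩, q⟩ ⟨⟨e', he'⟩, ⟨K', hK'⟩, q'⟩ hfe
    simp only [Subtype.mk.injEq] at hfe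
    induction q using QuotientAddGroup.induction_on with
    | H v =>
    induction q' using QuotientAddGroup.induction_on with
    | H v' =>
      simp only [hermiteOfQuot_mk] at hfe
      have hd : (0:ℤ) < ((n / e : ℕ) : ℤ) := by
        exact_mod_cast Nat.div_pos (Nat.le_of_dvd (Nat.pos_of_ne_zero hn)
          (Nat.dvd_of_mem_divisors he)) (Nat.pos_of_mem_divisors he)
      have hd' : (0:ℤ) < ((n / e' : ℕ) : ℤ) := by
        exact_mod_cast Nat.div_pos (Nat.le_of_dvd (Nat.pos_of_ne_zero hn)
          (Nat.dvd_of_mem_divisors he')) (Nat.pos_of_mem_divisors he')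
      obtain ⟨hKK, -, hvv⟩ := hermiteSub_inj hd hd' hfe
      have hee : e = e' := by
        have h1 : e = K.index := hK.symm
        have h2 : e' = K'.index := hK'.symm
        rw [h1, h2, hKK]
      subst hee
      subst hKK
      refine Sigma.ext rfl (heq_of_eq (Sigma.ext rfl (heq_of_eq ?_)))
      rw [QuotientAddGroup.eq]
      have : -v + v' = -(v - v') := by abel
      rw [this]
      exact K.neg_mem hvv
  · rintro ⟨H, hH⟩
    obtain ⟨K, d, v, hd, rfl⟩ := exists_hermiteSub H (by rw [hH]; exact hn)
    rw [hermiteSub_index K d v hd.ne'] at hH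
    have hKne : K.index ≠ 0 := by
      intro h0; rw [h0, zero_mul] at hH; exact hn hH.symm
    have hdvd : K.index ∣ n := ⟨d.natAbs, hH.symm⟩
    have hde : d.natAbs = n / K.index := by
      rw [← hH, Nat.mul_div_cancel_left _ (Nat.pos_of_ne_zero hKne)]
    have hmem : K.index ∈ n.divisors := Nat.mem_divisors.mpr ⟨hdvd, hn⟩
    refine ⟨⟨⟨K.index, hmem⟩, ⟨K, rfl⟩, (v : G ⧸ K)⟩, ?_⟩
    apply Subtype.ext
    show hermiteOfQuot K ((n / K.index : ℕ) : ℤ) (v : G ⧸ K) = hermiteSub K d v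
    rw [hermiteOfQuot_mk]
    congr 1
    rw [← hde, Int.natAbs_of_nonneg hd.le]

/-- The key recursion for counting finite-index subgroups of `G × ℤ`. -/
lemma card_subgroups_prod_int (n : ℕ) (hn : n ≠ 0)
    (hfin : ∀ e : ℕ, e ≠ 0 → Finite {K : AddSubgroup G // K.index = e}) :
    Nat.card {H : AddSubgroup (G × ℤ) // H.index = n}
      = ∑ e ∈ n.divisors, Nat.card {K : AddSubgroup G // K.index = e} * e := by
  classical
  rw [← Nat.card_congr (hermiteEquiv (G := G) n hn)]
  haveI hA : ∀ e : n.divisors, Finite {K : AddSubgroup G // K.index = (e : ℕ)} :=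
    fun e => hfin e (Nat.pos_of_mem_divisors e.2).ne'
  haveI hB : ∀ (e : n.divisors) (K : {K : AddSubgroup G // K.index = (e : ℕ)}),
      Finite (G ⧸ (K : AddSubgroup G)) := by
    intro e K
    haveI : (K : AddSubgroup G).FiniteIndex := ⟨by
      rw [K.2]; exact (Nat.pos_of_mem_divisors e.2).ne'⟩
    infer_instance
  calc Nat.card (HermiteData G n)
      = ∑ e : n.divisors, Nat.card
          (Σ K : {K : AddSubgroup G // K.index = (e : ℕ)}, G ⧸ (K : AddSubgroup G)) :=
        nat_card_sigma _
    _ = ∑ e : n.divisors, Nat.card {K : AddSubgroup G // K.index = (e : ℕ)} * (e : ℕ) := by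
        refine Finset.sum_congr rfl fun e _ => ?_
        haveI := Fintype.ofFinite {K : AddSubgroup G // K.index = (e : ℕ)}
        rw [nat_card_sigma]
        have hq : ∀ K : {K : AddSubgroup G // K.index = (e : ℕ)},
            Nat.card (G ⧸ (K : AddSubgroup G)) = (e : ℕ) := fun K => K.2
        rw [Finset.sum_congr rfl fun K _ => hq K, Finset.sum_const, Finset.card_univ,
          smul_eq_mul, Nat.card_eq_fintype_card]
    _ = ∑ e ∈ n.divisors, Nat.card {K : AddSubgroup G // K.index = e} * e :=
        Finset.sum_coe_sort n.divisors
          (fun e => Nat.card {K : AddSubgroup G // K.index = e} * e)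

/-- Reduction mod `e`, componentwise. -/
def piRedHom (m e : ℕ) : (Fin m → ℤ) →+ (Fin m → ZMod e) where
  toFun g := fun i => (g i : ZMod e)
  map_zero' := by funext i; simp
  map_add' g h := by funext i; simp

lemma finite_subgroups_index_eq (m e : ℕ) (he : e ≠ 0) :
    Finite {K : AddSubgroup (Fin m → ℤ) // K.index = e} := by
  classical
  haveI : NeZero e := ⟨he⟩
  have hker : ∀ K : AddSubgroup (Fin m → ℤ), K.index = e →
      (piRedHom m e).ker ≤ K := by
    intro K hK g hg
    have hdvd : ∀ i, (e : ℤ) ∣ g i := by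
      intro i
      have : ((g i : ZMod e) : ZMod e) = 0 := congrFun hg i
      exact_mod_cast (ZMod.intCast_zmod_eq_zero_iff_dvd _ _).mp this
    choose c hc using hdvd
    have hgc : g = e • fun i => c i := by
      funext i
      simp [hc i, mul_comm]
    rw [hgc, ← hK]
    exact K.nsmul_index_mem _
  have hinj : Function.Injective
      (fun K : {K : AddSubgroup (Fin m → ℤ) // K.index = e} =>
        (K : AddSubgroup (Fin m → ℤ)).map (piRedHom m e)) := by
    intro K K' h
    apply Subtype.ext
    have h1 := AddSubgroup.comap_map_eq (piRedHom m e) K.1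
    have h2 := AddSubgroup.comap_map_eq (piRedHom m e) K'.1
    have e1 : K.1 ⊔ (piRedHom m e).ker = K.1 := sup_eq_left.mpr (hker _ K.2)
    have e2 : K'.1 ⊔ (piRedHom m e).ker = K'.1 := sup_eq_left.mpr (hker _ K'.2)
    calc K.1 = (K.1.map (piRedHom m e)).comap (piRedHom m e) := by rw [h1, e1]
    _ = (K'.1.map (piRedHom m e)).comap (piRedHom m e) := congrArg _ h
    _ = K'.1 := by rw [h2, e2]
  haveI : Finite (AddSubgroup (Fin m → ZMod e)) :=
    Finite.of_injective (fun K => (K : Set (Fin m → ZMod e))) SetLike.coe_injective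
  exact Finite.of_injective _ hinj

lemma index_map_addEquiv {A B : Type*} [AddCommGroup A] [AddCommGroup B]
    (ε : A ≃+ B) (H : AddSubgroup A) :
    (H.map ε.toAddMonoidHom).index = H.index := by
  have hker : (ε.toAddMonoidHom).ker = ⊥ := (AddMonoidHom.ker_eq_bot_iff _).mpr ε.injective
  have hco : (H.map ε.toAddMonoidHom).comap ε.toAddMonoidHom = H := by
    rw [AddSubgroup.comap_map_eq, hker, sup_bot_eq]
  conv_rhs => rw [← hco]
  exact (AddSubgroup.index_comap_of_surjective _ (by exact ε.surjective)).symm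

lemma map_addEquiv_symm_map {A B : Type*} [AddCommGroup A] [AddCommGroup B]
    (ε : A ≃+ B) (H : AddSubgroup A) :
    (H.map ε.toAddMonoidHom).map ε.symm.toAddMonoidHom = H := by
  rw [AddSubgroup.map_map]
  have : ε.symm.toAddMonoidHom.comp ε.toAddMonoidHom = AddMonoidHom.id A := by
    ext a; simp
  rw [this]
  exact AddSubgroup.map_id H

/-- Transport subgroup counting along an additive equivalence. -/
lemma card_subgroups_congr {A B : Type*} [AddCommGroup A] [AddCommGroup B]
    (ε : A ≃+ B) (n : ℕ) :
    Nat.card {H : AddSubgroup A // H.index = n}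
      = Nat.card {H : AddSubgroup B // H.index = n} := by
  refine Nat.card_congr ⟨fun H => ⟨H.1.map ε.toAddMonoidHom, by rw [index_map_addEquiv, H.2]⟩,
    fun H => ⟨H.1.map ε.symm.toAddMonoidHom, by rw [index_map_addEquiv, H.2]⟩,
    fun H => Subtype.ext (map_addEquiv_symm_map ε H.1), fun H => Subtype.ext ?_⟩
  have := map_addEquiv_symm_map ε.symm H.1
  simpa using this

/-- Splitting off the first coordinate of `Fin (m+1) → ℤ`. -/
def piSuccAddEquiv (m : ℕ) : (Fin (m + 1) → ℤ) ≃+ (Fin m → ℤ) × ℤ where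
  toFun g := (fun i => g i.succ, g 0)
  invFun x := Fin.cons x.2 x.1
  left_inv g := by
    funext i
    refine Fin.cases ?_ ?_ i <;> simp
  right_inv x := by
    ext i <;> simp
  map_add' g h := by
    ext i <;> simp

open Finset in
lemma sum_antidiagonalTuple_succ {M : Type*} [AddCommMonoid M] (m ℓ : ℕ)
    (f : (Fin (m + 1) → ℕ) → M) :
    ∑ t ∈ Finset.Nat.antidiagonalTuple (m + 1) ℓ, f t
      = ∑ ab ∈ Finset.HasAntidiagonal.antidiagonal ℓ, ∑ t ∈ Finset.Nat.antidiagonalTuple m ab.2,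
          f (Fin.cons ab.1 t) := by
  classical
  rw [← Finset.sum_sigma ((Finset.HasAntidiagonal.antidiagonal ℓ))
    (fun ab => Finset.Nat.antidiagonalTuple m ab.2)
    (fun x => f (Fin.cons x.1.1 x.2))]
  refine Finset.sum_nbij' (fun (t : Fin (m + 1) → ℕ) =>
      (⟨(t 0, ∑ i : Fin m, t i.succ), Fin.tail t⟩ : Σ _ab : ℕ × ℕ, Fin m → ℕ))
    (fun x => Fin.cons x.1.1 x.2) ?_ ?_ ?_ ?_ ?_
  · intro t ht
    rw [Finset.Nat.mem_antidiagonalTuple] at ht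
    refine Finset.mem_sigma.mpr ⟨?_, ?_⟩
    · show (t 0, ∑ i : Fin m, t i.succ) ∈ Finset.HasAntidiagonal.antidiagonal ℓ
      rw [Finset.HasAntidiagonal.mem_antidiagonal]
      rw [← ht, Fin.sum_univ_succ]
    · show Fin.tail t ∈ Finset.Nat.antidiagonalTuple m (∑ i : Fin m, t i.succ)
      rw [Finset.Nat.mem_antidiagonalTuple]
      rfl
  · intro x hx
    rw [Finset.mem_sigma] at hx
    show Fin.cons x.1.1 x.2 ∈ Finset.Nat.antidiagonalTuple (m + 1) ℓ
    rw [Finset.Nat.mem_antidiagonalTuple, Fin.sum_univ_succ, Fin.cons_zero]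
    have h2 : (∑ i : Fin m, (Fin.cons x.1.1 x.2 : Fin (m + 1) → ℕ) i.succ) = x.1.2 := by
      simp only [Fin.cons_succ]
      exact Finset.Nat.mem_antidiagonalTuple.mp hx.2
    rw [h2]
    exact Finset.HasAntidiagonal.mem_antidiagonal.mp hx.1
  · intro t _
    show Fin.cons (t 0) (Fin.tail t) = t
    exact Fin.cons_self_tail t
  · intro x hx
    rw [Finset.mem_sigma] at hx
    have h2' : (∑ i : Fin m, x.2 i) = x.1.2 := Finset.Nat.mem_antidiagonalTuple.mp hx.2
    simp only [Fin.cons_zero, Fin.cons_succ, Fin.tail_cons, h2']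
  · intro t _
    show f t = f (Fin.cons (t 0) (Fin.tail t))
    rw [Fin.cons_self_tail]

lemma card_subgroups_pi_zero (n : ℕ) :
    Nat.card {H : AddSubgroup (Fin 0 → ℤ) // H.index = n} = if n = 1 then 1 else 0 := by
  have hall : ∀ H : AddSubgroup (Fin 0 → ℤ), H.index = 1 := by
    intro H
    have : Subsingleton (Fin 0 → ℤ) := ⟨fun a b => funext fun i => i.elim0⟩
    have : Subsingleton ((Fin 0 → ℤ) ⧸ H) := Quotient.instSubsingletonQuotient _
    exact Nat.card_eq_one_iff_unique.mpr ⟨this, ⟨0⟩⟩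
  split_ifs with h
  · subst h
    rw [Nat.card_eq_one_iff_unique]
    constructor
    · constructor
      rintro ⟨H, hH⟩ ⟨H', hH'⟩
      have hsub : Subsingleton (Fin 0 → ℤ) := ⟨fun a b => funext fun i => i.elim0⟩
      have : H = H' := by
        apply SetLike.ext
        intro x
        have hx0 : x = 0 := Subsingleton.elim x 0
        subst hx0
        simp only [zero_mem]
      exact Subtype.ext this
    · exact ⟨⟨⊤, hall ⊤⟩⟩
  · rw [Nat.card_eq_zero]
    left
    constructor
    rintro ⟨H, hH⟩
    exact h (hH ▸ hall H)

/-- The number of subgroups of `ℤ^m` of index `p^ℓ` equals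
`∑_{ℓ_1+⋯+ℓ_m = ℓ, ℓ_i ≥ 0} ∏_{i=1}^{m} p^{ℓ_i (i−1)}`. -/
theorem card_subgroups_index_prime_pow (p : ℕ) (hp : p.Prime) (m : ℕ)
    (hm : 0 < m) (ℓ : ℕ) :
    Nat.card {H : AddSubgroup (Fin m → ℤ) // H.index = p ^ ℓ} =
      ∑ t ∈ Finset.Nat.antidiagonalTuple m ℓ, ∏ i : Fin m, p ^ (t i * (i : ℕ)) := by
  clear hm
  induction m generalizing ℓ with
  | zero =>
    rw [card_subgroups_pi_zero]
    cases ℓ with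
    | zero =>
      rw [pow_zero, if_pos rfl, Finset.Nat.antidiagonalTuple_zero_zero]
      simp
    | succ n =>
      rw [if_neg (Nat.one_lt_pow (Nat.succ_ne_zero n) hp.one_lt).ne',
        Finset.Nat.antidiagonalTuple_zero_succ, Finset.sum_empty]
  | succ m ih =>
    rw [card_subgroups_congr (piSuccAddEquiv m) (p ^ ℓ),
      card_subgroups_prod_int (p ^ ℓ) (pow_ne_zero ℓ hp.pos.ne')
        (fun e he => finite_subgroups_index_eq m e he),
      Nat.divisors_prime_pow hp, Finset.sum_map]
    simp only [Function.Embedding.coeFn_mk]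
    have hLHS : ∀ j ∈ Finset.range (ℓ + 1),
        Nat.card {K : AddSubgroup (Fin m → ℤ) // K.index = p ^ j} * p ^ j
          = (∑ t ∈ Finset.Nat.antidiagonalTuple m j, ∏ i : Fin m, p ^ (t i * (i : ℕ)))
              * p ^ j := by
      intro j _
      rw [ih j]
    rw [Finset.sum_congr rfl hLHS]
    -- Now the right-hand side
    rw [sum_antidiagonalTuple_succ m ℓ (fun t => ∏ i : Fin (m + 1), p ^ (t i * (i : ℕ)))]
    have hprod : ∀ (a : ℕ) (t : Fin m → ℕ),
        (∏ i : Fin (m + 1), p ^ ((Fin.cons a t : Fin (m + 1) → ℕ) i * (i : ℕ)))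
          = (∏ i : Fin m, p ^ (t i * (i : ℕ))) * p ^ (∑ i, t i) := by
      intro a t
      rw [Fin.prod_univ_succ]
      simp only [Fin.cons_zero, Fin.cons_succ, Fin.val_zero, Nat.mul_zero, pow_zero, one_mul,
        Fin.val_succ]
      have : ∀ i : Fin m, p ^ (t i * ((i : ℕ) + 1)) = p ^ (t i * (i : ℕ)) * p ^ (t i) := by
        intro i
        rw [← pow_add, Nat.mul_succ]
      rw [Finset.prod_congr rfl fun i _ => this i, Finset.prod_mul_distrib,
        Finset.prod_pow_eq_pow_sum, Finset.prod_pow_eq_pow_sum]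
    have hinner : ∀ ab ∈ Finset.HasAntidiagonal.antidiagonal ℓ,
        (∑ t ∈ Finset.Nat.antidiagonalTuple m ab.2,
          ∏ i : Fin (m + 1), p ^ ((Fin.cons ab.1 t : Fin (m + 1) → ℕ) i * (i : ℕ)))
          = (∑ t ∈ Finset.Nat.antidiagonalTuple m ab.2, ∏ i : Fin m, p ^ (t i * (i : ℕ)))
              * p ^ ab.2 := by
      intro ab _
      rw [Finset.sum_mul]
      refine Finset.sum_congr rfl fun t ht => ?_
      rw [hprod ab.1 t, Finset.Nat.mem_antidiagonalTuple.mp ht]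
    rw [Finset.sum_congr rfl hinner]
    rw [Finset.Nat.sum_antidiagonal_eq_sum_range_succ_mk
      (fun ab => (∑ t ∈ Finset.Nat.antidiagonalTuple m ab.2,
        ∏ i : Fin m, p ^ (t i * (i : ℕ))) * p ^ ab.2) ℓ]
    rw [← Finset.sum_range_reflect]
    refine Finset.sum_congr rfl fun j hj => ?_
    have h1 : ℓ + 1 - 1 - j = ℓ - j := by omega
    rw [h1]
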